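/- Let g ∈ GL_n(ℂ) with g = b ẘ b' (b, b' upper triangular, ẘ the signed permutation matrix of w) such that b_{w(k),w(k)} b'_{k,k} > 0 for 1 ≤ k ≤ n. Then for all 1 ≤ k ≤ n, Δ_{w⁻¹([k])}(ι(g)) = ∏_{i=1}^{k} (b'_{w⁻¹(i),w⁻¹(i)} b_{i,i})⁻¹ > 0, where ι(g) = δₙ g⁻¹ δₙ. -/

import Mathlib

open Matrix BigOperators

noncomputable section

/-- `z` is a positive real number (as a complex number). -/
def IsPosReal (z : ℂ) : Prop := ∃ r : ℝ, 0 < r ∧ z = (r : ℂ)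

/-- The left-justified minor of `A` with rows the elements of `S` (in increasing order)
and columns `{0, ..., S.card - 1}`. -/
def lminor {n : ℕ} (A : Matrix (Fin n) (Fin n) ℂ) (S : Finset (Fin n)) : ℂ :=
  (A.submatrix (⇑(S.orderEmbOfFin rfl))
    (Fin.castLE (by simpa using S.card_le_univ))).det

/-- `W` is the signed permutation matrix `ẘ` of `w`. -/
def IsSignedPermMatrix {n : ℕ} (w : Equiv.Perm (Fin n)) (W : Matrix (Fin n) (Fin n) ℂ) : Prop :=
  (∀ i j, (i = w j → W i j = 1 ∨ W i j = -1) ∧ (i ≠ w j → W i j = 0)) ∧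
  ∀ S : Finset (Fin n), ∃ r : ℝ, 0 ≤ r ∧ lminor W S = (r : ℂ)

/-- The set `w([k]) = {w(1), ..., w(k)}`. -/
def wSet {n : ℕ} (w : Equiv.Perm (Fin n)) (k : ℕ) (hk : k ≤ n) : Finset (Fin n) :=
  Finset.image (fun j : Fin k => w (Fin.castLE hk j)) Finset.univ

/-- The diagonal matrix `δₙ = Diag(1, -1, 1, ..., (-1)^{n-1})`. -/
def deltaMat (n : ℕ) : Matrix (Fin n) (Fin n) ℂ :=
  Matrix.diagonal fun i => (-1 : ℂ) ^ (i : ℕ)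

theorem Equiv.Perm.inv_apply_self {α : Type*} (f : Equiv.Perm α) (x : α) : f⁻¹ (f x) = x :=
  Equiv.symm_apply_apply f x

theorem Equiv.Perm.apply_inv_self {α : Type*} (f : Equiv.Perm α) (x : α) : f (f⁻¹ x) = x :=
  Equiv.apply_symm_apply f x

lemma isPosReal_one : IsPosReal 1 := ⟨1, one_pos, by norm_num⟩

lemma IsPosReal.mul {z z' : ℂ} (h : IsPosReal z) (h' : IsPosReal z') : IsPosReal (z * z') := by
  obtain ⟨r, hr, rfl⟩ := h; obtain ⟨r', hr', rfl⟩ := h'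
  exact ⟨r * r', mul_pos hr hr', by push_cast; ring⟩

lemma IsPosReal.inv {z : ℂ} (h : IsPosReal z) : IsPosReal z⁻¹ := by
  obtain ⟨r, hr, rfl⟩ := h
  exact ⟨r⁻¹, inv_pos.2 hr, (Complex.ofReal_inv r).symm⟩

lemma isPosReal_prod {ι : Type*} (s : Finset ι) (f : ι → ℂ)
    (h : ∀ i ∈ s, IsPosReal (f i)) : IsPosReal (∏ i ∈ s, f i) :=
  Finset.prod_induction f IsPosReal (fun _ _ => IsPosReal.mul) isPosReal_one h

lemma lminor_eq_det {n : ℕ} (M : Matrix (Fin n) (Fin n) ℂ) (S : Finset (Fin n))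
    {k : ℕ} (h : S.card = k) (hkn : k ≤ n) :
    lminor M S = (M.submatrix (⇑(S.orderEmbOfFin h)) (Fin.castLE hkn)).det := by
  subst h; rfl

lemma wSet_card {n : ℕ} (u : Equiv.Perm (Fin n)) (k : ℕ) (hk : k ≤ n) :
    (wSet u k hk).card = k := by
  rw [wSet, Finset.card_image_of_injective _
      (show Function.Injective (fun j : Fin k => u (Fin.castLE hk j)) from
        fun a b h => Fin.castLE_injective hk (u.injective h)),
    Finset.card_univ, Fintype.card_fin]

lemma mem_wSet {n : ℕ} {u : Equiv.Perm (Fin n)} {k : ℕ} {hk : k ≤ n} {x : Fin n} :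
    x ∈ wSet u k hk ↔ ((u⁻¹ x : Fin n) : ℕ) < k := by
  constructor
  · rintro hx
    obtain ⟨j, -, rfl⟩ := Finset.mem_image.1 hx
    simp only [Equiv.Perm.inv_apply_self]
    exact j.isLt
  · intro h
    refine Finset.mem_image.2 ⟨⟨((u⁻¹ x : Fin n) : ℕ), h⟩, Finset.mem_univ _, ?_⟩
    have : Fin.castLE hk ⟨((u⁻¹ x : Fin n) : ℕ), h⟩ = u⁻¹ x := by
      apply Fin.ext; rfl
    rw [this, Equiv.Perm.apply_inv_self]

lemma wSet_succ {n : ℕ} (u : Equiv.Perm (Fin n)) (k : ℕ) (hk : k < n) :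
    wSet u (k + 1) hk = insert (u ⟨k, hk⟩) (wSet u k hk.le) := by
  ext x
  simp only [mem_wSet, Finset.mem_insert]
  constructor
  · intro h
    rcases Nat.lt_succ_iff_lt_or_eq.1 h with h | h
    · exact Or.inr h
    · left
      have : u⁻¹ x = ⟨k, hk⟩ := Fin.ext h
      rw [← this, Equiv.Perm.apply_inv_self]
  · rintro (rfl | h)
    · simp [Equiv.Perm.inv_apply_self]
    · exact Nat.lt_succ_of_lt h

lemma not_mem_wSet {n : ℕ} (u : Equiv.Perm (Fin n)) (k : ℕ) (hk : k < n) :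
    u ⟨k, hk⟩ ∉ wSet u k hk.le := by
  simp [mem_wSet]

lemma lminor_insert {n : ℕ} (M : Matrix (Fin n) (Fin n) ℂ) (S : Finset (Fin n))
    (c : Fin n) (hc : c ∉ S) (hn : S.card < n)
    (hsupp : ∀ i ∈ insert c S, i ≠ c → M i ⟨S.card, hn⟩ = 0) :
    lminor M (insert c S) =
      (-1) ^ (((S.filter (· < c)).card : ℕ) + S.card) * M c ⟨S.card, hn⟩ * lminor M S := by
  have hcard : (insert c S).card = S.card + 1 := Finset.card_insert_of_notMem hc
  set e' : Fin (S.card + 1) → Fin n := ⇑((insert c S).orderEmbOfFin hcard) with he'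
  have he'mono : StrictMono e' := ((insert c S).orderEmbOfFin hcard).strictMono
  -- find the position of c
  have hcmem : c ∈ Set.range e' := by
    rw [he', Finset.range_orderEmbOfFin]
    exact Finset.mem_insert_self c S
  obtain ⟨p, hp⟩ := hcmem
  -- the complement enumerates S
  have key1 : (fun r : Fin S.card => e' (p.succAbove r)) = ⇑(S.orderEmbOfFin rfl) := by
    apply Finset.orderEmbOfFin_unique rfl
    · intro r
      have hmem : e' (p.succAbove r) ∈ insert c S := Finset.orderEmbOfFin_mem _ _ _
      have hne : e' (p.succAbove r) ≠ c := by
        rw [← hp]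
        exact fun h => Fin.succAbove_ne p r (he'mono.injective h)
      exact (Finset.mem_insert.1 hmem).resolve_left hne
    · exact he'mono.comp (Fin.strictMono_succAbove p)
  -- position of c equals the rank of c
  have key2 : ((S.filter (· < c)).card : ℕ) = (p : ℕ) := by
    have himg : S.filter (· < c) = (Finset.Iio p).image e' := by
      ext x
      simp only [Finset.mem_filter, Finset.mem_image, Finset.mem_Iio]
      constructor
      · rintro ⟨hxS, hxc⟩
        have : x ∈ Set.range e' := by
          rw [he', Finset.range_orderEmbOfFin]
          exact Finset.mem_insert_of_mem hxS
        obtain ⟨r, rfl⟩ := this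
        exact ⟨r, by rwa [← he'mono.lt_iff_lt, hp], rfl⟩
      · rintro ⟨r, hrp, rfl⟩
        have hlt : e' r < c := by rw [← hp]; exact he'mono hrp
        have hmem : e' r ∈ insert c S := Finset.orderEmbOfFin_mem _ _ _
        exact ⟨(Finset.mem_insert.1 hmem).resolve_left (ne_of_lt hlt), hlt⟩
    rw [himg, Finset.card_image_of_injective _ he'mono.injective, Fin.card_Iio]
  -- rewrite the minor as a (S.card+1)-determinant
  have hn' : S.card + 1 ≤ n := hn
  rw [lminor_eq_det M (insert c S) hcard hn']
  rw [Matrix.det_succ_column _ (Fin.last S.card)]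
  rw [Finset.sum_eq_single p]
  · have hlastcol : Fin.castLE hn' (Fin.last S.card) = ⟨S.card, hn⟩ := rfl
    have hminor : (M.submatrix e' (Fin.castLE hn')).submatrix p.succAbove
        (Fin.last S.card).succAbove = M.submatrix (⇑(S.orderEmbOfFin rfl))
        (Fin.castLE (Nat.le_of_lt hn)) := by
      rw [← key1]
      ext r m
      simp only [Matrix.submatrix_apply]
      congr 1
      rw [Fin.succAbove_last]
      rfl
    rw [Matrix.submatrix_apply, hlastcol, hminor,
      show ((insert c S).orderEmbOfFin hcard) p = c from hp,
      ← lminor_eq_det M S rfl (Nat.le_of_lt hn), key2]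
    simp
  · intro i _ hip
    have hz : M (e' i) ⟨S.card, hn⟩ = 0 := by
      apply hsupp _ (Finset.orderEmbOfFin_mem _ _ _)
      intro h
      exact hip (he'mono.injective (h.trans hp.symm))
    rw [Matrix.submatrix_apply]
    have : Fin.castLE hn' (Fin.last S.card) = ⟨S.card, hn⟩ := rfl
    rw [this, hz, mul_zero, zero_mul]
  · intro h
    exact absurd (Finset.mem_univ p) h

lemma lminor_empty {n : ℕ} (M : Matrix (Fin n) (Fin n) ℂ) : lminor M ∅ = 1 := by
  rw [lminor_eq_det M ∅ Finset.card_empty (Nat.zero_le n)]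
  exact Matrix.det_fin_zero

lemma lminor_step {n : ℕ} (u : Equiv.Perm (Fin n)) (M : Matrix (Fin n) (Fin n) ℂ)
    (hsupp : ∀ i j, i ≠ u j → M i j = 0) (k : ℕ) (hk : k < n) :
    lminor M (wSet u (k + 1) hk) =
      (-1) ^ ((((wSet u k hk.le).filter (· < u ⟨k, hk⟩)).card) + k) *
        M (u ⟨k, hk⟩) ⟨k, hk⟩ * lminor M (wSet u k hk.le) := by
  have hcard := wSet_card u k hk.le
  have hne := not_mem_wSet u k hk
  have hnn : (wSet u k hk.le).card < n := by rw [hcard]; exact hk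
  have hidx : (⟨(wSet u k hk.le).card, hnn⟩ : Fin n) = ⟨k, hk⟩ := Fin.ext hcard
  rw [wSet_succ u k hk, lminor_insert M _ _ hne hnn]
  · rw [hidx, hcard]
  · intro i hi hic
    rw [hidx]
    apply hsupp
    intro h
    exact hic (by rw [h])

lemma lminor_wSet_one {n : ℕ} {w : Equiv.Perm (Fin n)} {W : Matrix (Fin n) (Fin n) ℂ}
    (hW : IsSignedPermMatrix w W) :
    ∀ k, (hk : k ≤ n) → lminor W (wSet w k hk) = 1 := by
  have hsupp : ∀ i j, i ≠ w j → W i j = 0 := fun i j h => (hW.1 i j).2 h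
  intro k
  induction k with
  | zero =>
    intro hk
    have : wSet w 0 hk = ∅ := by ext x; simp [mem_wSet]
    rw [this, lminor_empty]
  | succ k ih =>
    intro hk
    have hk' : k < n := hk
    have key : ∀ (x : ℂ), (x = 1 ∨ x = -1) → (∃ r : ℝ, 0 ≤ r ∧ x = (r : ℂ)) → x = 1 := by
      rintro x (rfl | rfl) ⟨r, hr0, hr⟩
      · rfl
      · exfalso
        have : (-1 : ℝ) = r := by exact_mod_cast hr
        linarith
    apply key
    · rw [lminor_step w W hsupp k hk', ih hk'.le, mul_one]
      rcases (hW.1 (w ⟨k, hk'⟩) ⟨k, hk'⟩).1 rfl with hs | hs <;>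
        rcases Nat.even_or_odd (((wSet w k hk'.le).filter (· < w ⟨k, hk'⟩)).card + k)
          with hpar | hpar <;>
        simp [hs, hpar.neg_one_pow]
    · exact hW.2 _

lemma signed_entry {n : ℕ} {w : Equiv.Perm (Fin n)} {W : Matrix (Fin n) (Fin n) ℂ}
    (hW : IsSignedPermMatrix w W) (k : ℕ) (hk : k < n) :
    W (w ⟨k, hk⟩) ⟨k, hk⟩ =
      (-1) ^ ((((wSet w k hk.le).filter (· < w ⟨k, hk⟩)).card) + k) := by
  have hsupp : ∀ i j, i ≠ w j → W i j = 0 := fun i j h => (hW.1 i j).2 h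
  have h1 := lminor_step w W hsupp k hk
  rw [lminor_wSet_one hW (k+1) hk, lminor_wSet_one hW k hk.le, mul_one] at h1
  set E := (((wSet w k hk.le).filter (· < w ⟨k, hk⟩)).card) + k
  have h2 : ((-1 : ℂ) ^ E) * ((-1 : ℂ) ^ E) = 1 := by
    rw [← pow_add]
    exact Even.neg_one_pow ⟨E, rfl⟩
  calc W (w ⟨k, hk⟩) ⟨k, hk⟩
      = ((-1 : ℂ) ^ E * (-1 : ℂ) ^ E) * W (w ⟨k, hk⟩) ⟨k, hk⟩ := by rw [h2, one_mul]
    _ = (-1 : ℂ) ^ E * ((-1 : ℂ) ^ E * W (w ⟨k, hk⟩) ⟨k, hk⟩) := by ring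
    _ = (-1 : ℂ) ^ E := by rw [← h1, mul_one]

lemma deltaConj_apply {n : ℕ} (X : Matrix (Fin n) (Fin n) ℂ) (i j : Fin n) :
    (deltaMat n * X * deltaMat n) i j = (-1) ^ ((i : ℕ) + (j : ℕ)) * X i j := by
  simp [deltaMat, Matrix.diagonal_mul, Matrix.mul_diagonal, pow_add]
  ring

lemma lminor_iota_one {n : ℕ} {w : Equiv.Perm (Fin n)} {W : Matrix (Fin n) (Fin n) ℂ}
    (hW : IsSignedPermMatrix w W) :
    ∀ k, (hk : k ≤ n) → lminor (deltaMat n * Wᵀ * deltaMat n) (wSet w⁻¹ k hk) = 1 := by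
  set W' := deltaMat n * Wᵀ * deltaMat n with hW'
  have hsupp' : ∀ i j, i ≠ w⁻¹ j → W' i j = 0 := by
    intro i j h
    rw [hW', deltaConj_apply, Matrix.transpose_apply, (hW.1 j i).2, mul_zero]
    intro hji
    exact h (by rw [hji, Equiv.Perm.inv_apply_self])
  intro k
  induction k with
  | zero =>
    intro hk
    have : wSet w⁻¹ 0 hk = ∅ := by ext x; simp [mem_wSet]
    rw [this, lminor_empty]
  | succ k ih =>
    intro hk
    have hk' : k < n := hk
    rw [lminor_step w⁻¹ W' hsupp' k hk', ih hk'.le, mul_one]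
    set c : Fin n := w⁻¹ ⟨k, hk'⟩ with hc
    have hwc : w c = ⟨k, hk'⟩ := Equiv.Perm.apply_inv_self w ⟨k, hk'⟩
    have hcval : W' c ⟨k, hk'⟩ = (-1 : ℂ) ^ ((c : ℕ) + k) * W ⟨k, hk'⟩ c := by
      rw [hW', deltaConj_apply, Matrix.transpose_apply]
    have hentry : W ⟨k, hk'⟩ c =
        (-1) ^ ((((wSet w (c : ℕ) c.isLt.le).filter (· < w ⟨(c : ℕ), c.isLt⟩)).card)
          + (c : ℕ)) := by
      rw [show (⟨k, hk'⟩ : Fin n) = w ⟨(c : ℕ), c.isLt⟩ from by rw [Fin.eta, hwc]]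
      exact signed_entry hW (c : ℕ) c.isLt
    -- equality of the two rank counts
    have hrank : ((wSet w⁻¹ k hk'.le).filter (· < c)).card =
        ((wSet w (c : ℕ) c.isLt.le).filter (· < w ⟨(c : ℕ), c.isLt⟩)).card := by
      apply Finset.card_bij (fun x _ => w x)
      · intro x hx
        rw [Finset.mem_filter] at hx ⊢
        obtain ⟨hx1, hx2⟩ := hx
        rw [mem_wSet] at hx1
        simp only [inv_inv] at hx1
        constructor
        · rw [mem_wSet]
          simpa [Equiv.Perm.inv_apply_self] using (show (x : ℕ) < (c : ℕ) from hx2)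
        · rw [Fin.eta, hwc]
          exact hx1
      · intro x hx y hy hxy
        exact w.injective hxy
      · intro y hy
        rw [Finset.mem_filter, mem_wSet] at hy
        obtain ⟨hy1, hy2⟩ := hy
        refine ⟨w⁻¹ y, ?_, Equiv.Perm.apply_inv_self w y⟩
        rw [Finset.mem_filter, mem_wSet]
        simp only [inv_inv, Equiv.Perm.apply_inv_self]
        constructor
        · rw [Fin.eta, hwc] at hy2
          exact hy2
        · exact hy1
      
    rw [hcval, hentry, hrank, ← pow_add, ← pow_add]
    exact Even.neg_one_pow ⟨_ + k + (c : ℕ), by ring⟩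

lemma inv_diag_of_triangular {n : ℕ} (B : Matrix (Fin n) (Fin n) ℂ)
    (hB : B.BlockTriangular id) (h : ∀ i, B i i ≠ 0) (i : Fin n) :
    B⁻¹ i i = (B i i)⁻¹ := by
  have hdet : IsUnit B.det := by
    rw [Matrix.det_of_upperTriangular hB]
    exact isUnit_iff_ne_zero.2 (Finset.prod_ne_zero_iff.2 fun j _ => h j)
  have : Invertible B := B.invertibleOfIsUnitDet hdet
  have hinv : B⁻¹.BlockTriangular id := Matrix.blockTriangular_inv_of_blockTriangular hB
  have h1 : (B * B⁻¹) i i = 1 := by rw [Matrix.mul_nonsing_inv _ hdet, Matrix.one_apply_eq]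
  rw [Matrix.mul_apply, Finset.sum_eq_single i] at h1
  · exact eq_inv_of_mul_eq_one_right h1
  · intro j _ hji
    rcases lt_or_gt_of_ne hji with hlt | hlt
    · rw [hB (show id j < id i from hlt), zero_mul]
    · rw [hinv (show id i < id j from hlt), mul_zero]
  · intro hi
    exact absurd (Finset.mem_univ i) hi

lemma inv_triangular {n : ℕ} (B : Matrix (Fin n) (Fin n) ℂ)
    (hB : B.BlockTriangular id) (h : ∀ i, B i i ≠ 0) :
    B⁻¹.BlockTriangular id := by
  have hdet : IsUnit B.det := by
    rw [Matrix.det_of_upperTriangular hB]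
    exact isUnit_iff_ne_zero.2 (Finset.prod_ne_zero_iff.2 fun j _ => h j)
  have : Invertible B := B.invertibleOfIsUnitDet hdet
  exact Matrix.blockTriangular_inv_of_blockTriangular hB

lemma signed_inv_eq_transpose {n : ℕ} {w : Equiv.Perm (Fin n)} {W : Matrix (Fin n) (Fin n) ℂ}
    (hW : IsSignedPermMatrix w W) : W⁻¹ = Wᵀ := by
  apply Matrix.inv_eq_right_inv
  ext i i'
  rw [Matrix.mul_apply, Matrix.one_apply]
  by_cases h : i = i'
  · subst h
    rw [Finset.sum_eq_single (w⁻¹ i)]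
    · simp only [Matrix.transpose_apply]
      rcases (hW.1 i (w⁻¹ i)).1 (Equiv.Perm.apply_inv_self w i).symm with h1 | h1 <;>
        rw [h1] <;> norm_num
    · intro j _ hj
      rw [(hW.1 i j).2, zero_mul]
      intro hij
      exact hj (by rw [hij, Equiv.Perm.inv_apply_self])
    · intro hi
      exact absurd (Finset.mem_univ _) hi
  · rw [if_neg h]
    apply Finset.sum_eq_zero
    intro j _
    by_cases hij : i = w j
    · rw [Matrix.transpose_apply, (hW.1 i' j).2 (fun hi'j => h (hij.trans hi'j.symm)), mul_zero]
    · rw [(hW.1 i j).2 hij, zero_mul]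

lemma deltaMat_mul_self (n : ℕ) : deltaMat n * deltaMat n = 1 := by
  rw [deltaMat, Matrix.diagonal_mul_diagonal]
  convert Matrix.diagonal_one
  rw [← pow_add]
  exact Even.neg_one_pow ⟨_, rfl⟩

/-- if `g = b ẘ b'` with `b, b'` upper triangular and
`b_{w(k),w(k)} b'_{k,k} > 0` for all `k`, then for all `1 ≤ k ≤ n` the left-justified
minor `Δ_{w⁻¹([k])}(ι(g))` equals `∏_{i=1}^{k} (b'_{w⁻¹(i),w⁻¹(i)} b_{i,i})⁻¹`, which
is a positive real number. -/
theorem stmt5 {n : ℕ} (w : Equiv.Perm (Fin n)) (g b b' W : Matrix (Fin n) (Fin n) ℂ)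
    (hW : IsSignedPermMatrix w W)
    (hb : b.BlockTriangular id) (hb' : b'.BlockTriangular id)
    (hg : g = b * W * b')
    (hpos : ∀ k : Fin n, IsPosReal (b (w k) (w k) * b' k k))
    (k : ℕ) (hk1 : 1 ≤ k) (hk : k ≤ n) :
    lminor (deltaMat n * g⁻¹ * deltaMat n) (wSet w⁻¹ k hk) =
      ∏ i : Fin k, (b' (w⁻¹ (Fin.castLE hk i)) (w⁻¹ (Fin.castLE hk i)) *
        b (Fin.castLE hk i) (Fin.castLE hk i))⁻¹ ∧
    IsPosReal (lminor (deltaMat n * g⁻¹ * deltaMat n) (wSet w⁻¹ k hk)) := by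
  -- nonvanishing of diagonals
  have hbd : ∀ i, b i i ≠ 0 := by
    intro i h0
    obtain ⟨r, hr, hre⟩ := hpos (w⁻¹ i)
    rw [Equiv.Perm.apply_inv_self, h0, zero_mul] at hre
    have : r = 0 := by exact_mod_cast hre.symm
    linarith
  have hbd' : ∀ i, b' i i ≠ 0 := by
    intro i h0
    obtain ⟨r, hr, hre⟩ := hpos i
    rw [h0, mul_zero] at hre
    have : r = 0 := by exact_mod_cast hre.symm
    linarith
  set W' : Matrix (Fin n) (Fin n) ℂ := deltaMat n * Wᵀ * deltaMat n with hW'def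
  set B₁ : Matrix (Fin n) (Fin n) ℂ := deltaMat n * b'⁻¹ * deltaMat n with hB₁def
  set B₂ : Matrix (Fin n) (Fin n) ℂ := deltaMat n * b⁻¹ * deltaMat n with hB₂def
  have hginv : g⁻¹ = b'⁻¹ * (Wᵀ * b⁻¹) := by
    rw [hg, Matrix.mul_inv_rev, Matrix.mul_inv_rev, signed_inv_eq_transpose hW]
  have hcan : ∀ X : Matrix (Fin n) (Fin n) ℂ, deltaMat n * (deltaMat n * X) = X := by
    intro X
    rw [← Matrix.mul_assoc, deltaMat_mul_self, Matrix.one_mul]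
  have hA : deltaMat n * g⁻¹ * deltaMat n = B₁ * (W' * B₂) := by
    rw [hginv, hB₁def, hW'def, hB₂def]
    simp only [Matrix.mul_assoc]
    rw [hcan, hcan]
  -- triangularity
  have hbinv : b⁻¹.BlockTriangular id := inv_triangular b hb hbd
  have hbinv' : b'⁻¹.BlockTriangular id := inv_triangular b' hb' hbd'
  have hB₁tri : B₁.BlockTriangular id := by
    intro i j hij
    rw [hB₁def, deltaConj_apply, hbinv' hij, mul_zero]
  have hB₂tri : B₂.BlockTriangular id := by
    intro i j hij
    rw [hB₂def, deltaConj_apply, hbinv hij, mul_zero]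
  have hW'supp : ∀ i j, i ≠ w⁻¹ j → W' i j = 0 := by
    intro i j h
    rw [hW'def, deltaConj_apply, Matrix.transpose_apply, (hW.1 j i).2, mul_zero]
    intro hji
    exact h (by rw [hji, Equiv.Perm.inv_apply_self])
  -- setup of the minor
  set S : Finset (Fin n) := wSet w⁻¹ k hk with hSdef
  have hScard : S.card = k := wSet_card w⁻¹ k hk
  set f : Fin k → Fin n := ⇑(S.orderEmbOfFin hScard) with hfdef
  have hfmono : StrictMono f := (S.orderEmbOfFin hScard).strictMono
  have hmemS : ∀ x : Fin n, x ∈ S ↔ ((w x : Fin n) : ℕ) < k := by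
    intro x
    rw [hSdef, mem_wSet, inv_inv]
  have himg : Finset.image f Finset.univ = S := by
    apply Finset.coe_injective
    rw [Finset.coe_image, Finset.coe_univ, Set.image_univ, hfdef, Finset.range_orderEmbOfFin]
  have h0 : lminor (deltaMat n * g⁻¹ * deltaMat n) S =
      ((deltaMat n * g⁻¹ * deltaMat n).submatrix f (Fin.castLE hk)).det :=
    lminor_eq_det _ S hScard hk
  have hNzero : ∀ j : Fin n, j ∉ S → ∀ m : Fin k, (W' * B₂) j (Fin.castLE hk m) = 0 := by
    intro j hj m
    rw [Matrix.mul_apply]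
    apply Finset.sum_eq_zero
    intro c _
    by_cases hc : c = w j
    · subst hc
      have hklewj : k ≤ ((w j : Fin n) : ℕ) := le_of_not_gt fun h => hj ((hmemS j).2 h)
      have hlt : id (Fin.castLE hk m) < id (w j) := by
        simp only [id_eq, Fin.lt_def]
        exact lt_of_lt_of_le m.isLt hklewj
      rw [hB₂tri hlt, mul_zero]
    · have : W' j c = 0 :=
        hW'supp j c (fun h => hc (by rw [h, Equiv.Perm.apply_inv_self]))
      rw [this, zero_mul]
  have hM1 : (deltaMat n * g⁻¹ * deltaMat n).submatrix f (Fin.castLE hk) =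
      (B₁.submatrix f f) * ((W' * B₂).submatrix f (Fin.castLE hk)) := by
    rw [hA]
    ext r m
    rw [Matrix.submatrix_apply, Matrix.mul_apply, Matrix.mul_apply]
    calc ∑ j : Fin n, B₁ (f r) j * (W' * B₂) j (Fin.castLE hk m)
        = ∑ j ∈ Finset.image f Finset.univ, B₁ (f r) j * (W' * B₂) j (Fin.castLE hk m) := by
          refine (Finset.sum_subset (Finset.subset_univ _) fun j _ hj => ?_).symm
          rw [hNzero j (by rwa [himg] at hj) m, mul_zero]
      _ = ∑ r' : Fin k, B₁ (f r) (f r') * (W' * B₂) (f r') (Fin.castLE hk m) :=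
          Finset.sum_image (fun a _ c _ h => hfmono.injective h)
      _ = ∑ r' : Fin k, B₁.submatrix f f r r' *
            (W' * B₂).submatrix f (Fin.castLE hk) r' m := rfl
  have hM2 : (W' * B₂).submatrix f (Fin.castLE hk) =
      (W'.submatrix f (Fin.castLE hk)) * (B₂.submatrix (Fin.castLE hk) (Fin.castLE hk)) := by
    ext r m
    simp only [Matrix.submatrix_apply, Matrix.mul_apply]
    have hfr : ((w (f r) : Fin n) : ℕ) < k :=
      (hmemS (f r)).1 (by rw [hfdef]; exact Finset.orderEmbOfFin_mem _ _ _)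
    have hcast : Fin.castLE hk (⟨((w (f r) : Fin n) : ℕ), hfr⟩ : Fin k) = w (f r) :=
      Fin.ext rfl
    have hL : ∑ c : Fin n, W' (f r) c * B₂ c (Fin.castLE hk m) =
        W' (f r) (w (f r)) * B₂ (w (f r)) (Fin.castLE hk m) := by
      apply Finset.sum_eq_single
      · intro c _ hc
        have : W' (f r) c = 0 :=
          hW'supp (f r) c (fun h => hc (by rw [h, Equiv.Perm.apply_inv_self]))
        rw [this, zero_mul]
      · intro h; exact absurd (Finset.mem_univ _) h
    have hR : ∑ m' : Fin k, W' (f r) (Fin.castLE hk m') *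
        B₂ (Fin.castLE hk m') (Fin.castLE hk m) =
        W' (f r) (w (f r)) * B₂ (w (f r)) (Fin.castLE hk m) := by
      rw [Finset.sum_eq_single (⟨((w (f r) : Fin n) : ℕ), hfr⟩ : Fin k)]
      · rw [hcast]
      · intro m' _ hm'
        have hz : W' (f r) (Fin.castLE hk m') = 0 := by
          apply hW'supp
          intro h
          apply hm'
          apply Fin.ext
          have : Fin.castLE hk m' = w (f r) := by rw [h, Equiv.Perm.apply_inv_self]
          simpa using congrArg Fin.val this
        rw [hz, zero_mul]
      · intro h; exact absurd (Finset.mem_univ _) h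
    rw [hL, hR]
  have hdet1 : (B₁.submatrix f f).det = ∏ r : Fin k, B₁ (f r) (f r) := by
    apply Matrix.det_of_upperTriangular
    intro i j hij
    exact hB₁tri (show id (f j) < id (f i) from hfmono hij)
  have hdet2 : (B₂.submatrix (Fin.castLE hk) (Fin.castLE hk)).det =
      ∏ m : Fin k, B₂ (Fin.castLE hk m) (Fin.castLE hk m) := by
    apply Matrix.det_of_upperTriangular
    intro i j hij
    exact hB₂tri (show id (Fin.castLE hk j) < id (Fin.castLE hk i) from hij)
  have hdetW' : (W'.submatrix f (Fin.castLE hk)).det = 1 := by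
    rw [← lminor_eq_det W' S hScard hk, hW'def, hSdef]
    exact lminor_iota_one hW k hk
  have hB₁diag : ∀ r : Fin k, B₁ (f r) (f r) = (b' (f r) (f r))⁻¹ := by
    intro r
    rw [hB₁def, deltaConj_apply, inv_diag_of_triangular b' hb' hbd',
      Even.neg_one_pow ⟨_, rfl⟩, one_mul]
  have hB₂diag : ∀ m : Fin k, B₂ (Fin.castLE hk m) (Fin.castLE hk m) =
      (b (Fin.castLE hk m) (Fin.castLE hk m))⁻¹ := by
    intro m
    rw [hB₂def, deltaConj_apply, inv_diag_of_triangular b hb hbd,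
      Even.neg_one_pow ⟨_, rfl⟩, one_mul]
  have hprod1 : ∏ j ∈ S, (b' j j)⁻¹ = ∏ r : Fin k, (b' (f r) (f r))⁻¹ := by
    rw [← himg]
    exact Finset.prod_image (fun a _ c _ h => hfmono.injective h)
  have hprod2 : ∏ j ∈ S, (b' j j)⁻¹ =
      ∏ i : Fin k, (b' (w⁻¹ (Fin.castLE hk i)) (w⁻¹ (Fin.castLE hk i)))⁻¹ := by
    rw [show S = Finset.image (fun i : Fin k => w⁻¹ (Fin.castLE hk i)) Finset.univ from rfl]
    exact Finset.prod_image
      (fun a _ c _ h => Fin.castLE_injective hk ((w⁻¹).injective h))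
  have hmain : lminor (deltaMat n * g⁻¹ * deltaMat n) S =
      ∏ i : Fin k, (b' (w⁻¹ (Fin.castLE hk i)) (w⁻¹ (Fin.castLE hk i)) *
        b (Fin.castLE hk i) (Fin.castLE hk i))⁻¹ := by
    rw [h0, hM1, Matrix.det_mul, hM2, Matrix.det_mul, hdet1, hdet2, hdetW', one_mul]
    rw [Finset.prod_congr rfl (fun r _ => hB₁diag r),
      Finset.prod_congr rfl (fun m _ => hB₂diag m)]
    have hsplit : ∏ i : Fin k, (b' (w⁻¹ (Fin.castLE hk i)) (w⁻¹ (Fin.castLE hk i)) *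
        b (Fin.castLE hk i) (Fin.castLE hk i))⁻¹ =
        (∏ i : Fin k, (b' (w⁻¹ (Fin.castLE hk i)) (w⁻¹ (Fin.castLE hk i)))⁻¹) *
          ∏ i : Fin k, (b (Fin.castLE hk i) (Fin.castLE hk i))⁻¹ := by
      rw [← Finset.prod_mul_distrib]
      exact Finset.prod_congr rfl (fun i _ => mul_inv _ _)
    rw [hsplit]
    congr 1
    exact hprod1.symm.trans hprod2
  refine ⟨hmain, ?_⟩
  rw [hmain]
  apply isPosReal_prod
  intro i _
  apply IsPosReal.inv
  have := hpos (w⁻¹ (Fin.castLE hk i))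
  rw [Equiv.Perm.apply_inv_self] at this
  rw [mul_comm]
  exact this
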